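/- arXiv:1207.5115 — 2 statements merged into one kernel-verified Lean document; each statement's English description precedes it below -/
import Mathlib

section
/- Let f_1, ..., f_k be polynomials in n variables over a field of characteristic zero. If there exists a nonzero polynomial A in k variables with A(f_1,...,f_k) = 0, then the Jacobian matrix (∂f_i/∂x_j), of size k × n, has rank strictly less than k over the field of rational functions. -/
open MvPolynomial Finsupp

section Aux

variable {F : Type*} [Field F] {σ : Type*} [DecidableEq σ]

lemma stmt8_coeff_pderiv (i : σ) (m : σ →₀ ℕ) (B : MvPolynomial σ F) :
    coeff m (pderiv i B) = (m i + 1 : ℕ) * coeff (m + Finsupp.single i 1) B := by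
  induction B using MvPolynomial.induction_on' with
  | add p q hp hq => simp [hp, hq, mul_add]
  | monomial s a =>
    rw [pderiv_monomial, coeff_monomial, coeff_monomial]
    by_cases h : s = m + Finsupp.single i 1
    · subst h
      have h1 : m + Finsupp.single i 1 - Finsupp.single i 1 = m := by
        simp [add_tsub_cancel_right]
      rw [if_pos h1, if_pos rfl]
      simp [mul_comm]
    · rw [if_neg h]
      by_cases h2 : s - Finsupp.single i 1 = m
      · rw [if_pos h2]
        by_cases h3 : s i = 0
        · simp [h3]
        · exfalso
          apply h
          rw [← h2, tsub_add_cancel_of_le]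
          rwa [Finsupp.single_le_iff, Nat.one_le_iff_ne_zero]
      · rw [if_neg h2, mul_zero]

lemma stmt8_totalDegree_pderiv_lt [CharZero F] (i : σ) (B : MvPolynomial σ F)
    (hd : B.totalDegree ≠ 0) :
    (pderiv i B).totalDegree < B.totalDegree := by
  rw [totalDegree, Finset.sup_lt_iff (by simpa [bot_eq_zero] using Nat.pos_of_ne_zero hd)]
  intro m hm
  rw [MvPolynomial.mem_support_iff, stmt8_coeff_pderiv] at hm
  have h2 : m + Finsupp.single i 1 ∈ B.support := by
    rw [MvPolynomial.mem_support_iff]; intro h; rw [h, mul_zero] at hm; exact hm rfl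
  have h3 := MvPolynomial.le_totalDegree h2
  have h4 : (m + Finsupp.single i 1).sum (fun _ e => e) = m.sum (fun _ e => e) + 1 := by
    rw [Finsupp.sum_add_index (by simp) (by simp)]
    simp
  omega

lemma stmt8_exists_pderiv_ne_zero [CharZero F] (B : MvPolynomial σ F)
    (hd : B.totalDegree ≠ 0) :
    ∃ i, pderiv i B ≠ 0 := by
  by_contra h
  push_neg at h
  apply hd
  rw [totalDegree_eq_zero_iff]
  intro m hm x
  by_contra hx
  have h0 : m - Finsupp.single x 1 + Finsupp.single x 1 = m := by
    rw [tsub_add_cancel_of_le]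
    rwa [Finsupp.single_le_iff, Nat.one_le_iff_ne_zero]
  have := stmt8_coeff_pderiv x (m - Finsupp.single x 1) B
  rw [h x, coeff_zero, h0] at this
  rw [MvPolynomial.mem_support_iff] at hm
  exact (mul_ne_zero (Nat.cast_ne_zero.2 (Nat.succ_ne_zero _)) hm) this.symm

end Aux

section Aux2

variable {F : Type*} [Field F] {k n : ℕ}

lemma stmt8_chain_rule (f : Fin k → MvPolynomial (Fin n) F) (j : Fin n)
    (B : MvPolynomial (Fin k) F) :
    pderiv j (aeval f B) = ∑ i, aeval f (pderiv i B) * pderiv j (f i) := by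
  induction B using MvPolynomial.induction_on with
  | C a => simp
  | add p q hp hq => simp only [map_add, hp, hq, add_mul, Finset.sum_add_distrib]
  | mul_X p i₀ hp =>
    simp only [map_mul, aeval_X, pderiv_mul, hp, Finset.sum_mul, map_add, add_mul]
    rw [Finset.sum_add_distrib]
    congr 1
    · exact Finset.sum_congr rfl fun i _ => by ring
    · rw [Finset.sum_eq_single i₀]
      · simp
      · intro i _ hi
        simp [pderiv_X_of_ne (Ne.symm hi)]
      · simp

lemma stmt8_totalDegree_ne_zero (f : Fin k → MvPolynomial (Fin n) F)
    (B : MvPolynomial (Fin k) F) (hB : B ≠ 0) (hann : aeval f B = 0) :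
    B.totalDegree ≠ 0 := by
  intro hd
  have hC : B = C (coeff 0 B) := by
    ext m
    rw [totalDegree_eq_zero_iff] at hd
    by_cases hm : m = 0
    · subst hm; simp
    · rw [coeff_C, if_neg (by intro h; exact hm h.symm)]
      by_contra hc
      exact hm (Finsupp.ext fun x => hd m (MvPolynomial.mem_support_iff.2 hc) x)
  rw [hC, aeval_C] at hann
  apply hB
  rw [hC]
  rw [(map_eq_zero_iff (algebraMap F (MvPolynomial (Fin n) F)) (C_injective _ F)).1 hann,
    map_zero]

end Aux2

/-- If polynomials `f_1, …, f_k` over a characteristic-zero field are algebraically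
dependent (there is a nonzero annihilating polynomial `A` with `A(f_1,…,f_k) = 0`),
then their Jacobian matrix has rank strictly less than `k` over the field of rational
functions. -/
theorem stmt8 {F : Type*} [Field F] [CharZero F] {k n : ℕ}
    (f : Fin k → MvPolynomial (Fin n) F)
    (A : MvPolynomial (Fin k) F) (hA : A ≠ 0)
    (hann : MvPolynomial.aeval f A = 0) :
    (Matrix.of fun (i : Fin k) (j : Fin n) =>
        algebraMap (MvPolynomial (Fin n) F) (FractionRing (MvPolynomial (Fin n) F))
          (MvPolynomial.pderiv j (f i))).rank < k := by
  classical
  set K := FractionRing (MvPolynomial (Fin n) F)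
  set φ := algebraMap (MvPolynomial (Fin n) F) K with hφ
  set M : Matrix (Fin k) (Fin n) K :=
    Matrix.of fun (i : Fin k) (j : Fin n) => φ (pderiv j (f i)) with hM
  -- choose an annihilator of minimal total degree
  have hS : ∃ d : ℕ, ∃ B : MvPolynomial (Fin k) F,
      B ≠ 0 ∧ aeval f B = 0 ∧ B.totalDegree = d := ⟨A.totalDegree, A, hA, hann, rfl⟩
  obtain ⟨B, hB0, hBann, hBdeg⟩ := Nat.find_spec hS
  have hmin : ∀ C : MvPolynomial (Fin k) F, C ≠ 0 → aeval f C = 0 →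
      B.totalDegree ≤ C.totalDegree := by
    intro C hC0 hCann
    rw [hBdeg]
    exact Nat.find_min' hS ⟨C, hC0, hCann, rfl⟩
  have hd := stmt8_totalDegree_ne_zero f B hB0 hBann
  obtain ⟨i₀, hi₀⟩ := stmt8_exists_pderiv_ne_zero B hd
  set v : Fin k → MvPolynomial (Fin n) F := fun i => aeval f (pderiv i B) with hv
  have hv0 : v i₀ ≠ 0 := by
    intro h
    exact absurd (hmin (pderiv i₀ B) hi₀ h)
      (not_le.2 (stmt8_totalDegree_pderiv_lt i₀ B hd))
  have hrel : ∀ j, ∑ i, v i * pderiv j (f i) = 0 := fun j => by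
    rw [hv]
    simp only
    rw [← stmt8_chain_rule f j B, hBann, map_zero]
  have hwrel : ∑ i, φ (v i) • (M i) = 0 := by
    funext j
    have : (∑ i, φ (v i) • (M i)) j = ∑ i, φ (v i) * φ (pderiv j (f i)) := by
      simp [hM, Finset.sum_apply, Matrix.of_apply]
    rw [this, Pi.zero_apply]
    have h2 : ∑ i, φ (v i) * φ (pderiv j (f i)) = φ (∑ i, v i * pderiv j (f i)) := by
      rw [map_sum]
      exact Finset.sum_congr rfl fun i _ => (map_mul φ _ _).symm
    rw [h2, hrel j, map_zero]
  have hnotli : ¬ LinearIndependent K M := by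
    intro h
    have h0 := Fintype.linearIndependent_iff.1 h (fun i => φ (v i)) hwrel i₀
    rw [hφ] at h0
    exact hv0 ((map_eq_zero_iff _ (IsFractionRing.injective _ _)).1 h0)
  rw [Matrix.rank_eq_finrank_span_row]
  by_contra hc
  push_neg at hc
  apply hnotli
  apply linearIndependent_iff_card_le_finrank_span.2
  have hc' : k ≤ Module.finrank K (Submodule.span K (Set.range M)) := hc
  simpa [Set.finrank] using hc'
end

section
/- Let F = (I_2(f), I_2(g)) with covariance matrix C. Then the law of F is absolutely continuous with respect to Lebesgue measure on R² if and only if det C > 0. -/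
open MeasureTheory ProbabilityTheory

namespace Stmt14

variable {n : ℕ}

/-- quadratic form -/
def qf (A : Matrix (Fin n) (Fin n) ℝ) (x : Fin n → ℝ) : ℝ := ∑ i, ∑ j, A i j * x i * x j

/-- matrix-vector product -/
def mv (A : Matrix (Fin n) (Fin n) ℝ) (x : Fin n → ℝ) (i : Fin n) : ℝ := ∑ k, A i k * x k

/-- 2x2 minor of the two gradient vectors -/
def mnr (A B : Matrix (Fin n) (Fin n) ℝ) (x : Fin n → ℝ) (i j : Fin n) : ℝ :=
  mv A x i * mv B x j - mv A x j * mv B x i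

lemma mv_add (A : Matrix (Fin n) (Fin n) ℝ) (x y : Fin n → ℝ) (i : Fin n) :
    mv A (x + y) i = mv A x i + mv A y i := by
  simp [mv, mul_add, Finset.sum_add_distrib]

lemma mv_smul (A : Matrix (Fin n) (Fin n) ℝ) (c : ℝ) (x : Fin n → ℝ) (i : Fin n) :
    mv A (c • x) i = c * mv A x i := by
  simp [mv, Finset.mul_sum]; congr 1; ext k; ring

lemma qf_eq_sum_mv (A : Matrix (Fin n) (Fin n) ℝ) (x : Fin n → ℝ) :
    qf A x = ∑ i, mv A x i * x i := by
  simp [qf, mv, Finset.sum_mul]; congr 1; ext i; congr 1; ext k; ring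

lemma mv_symm {A : Matrix (Fin n) (Fin n) ℝ} (hA : A.IsSymm) (x y : Fin n → ℝ) :
    ∑ k, mv A x k * y k = ∑ k, mv A y k * x k := by
  simp only [mv, Finset.sum_mul]
  rw [Finset.sum_comm]
  congr 1; ext i; congr 1; ext k
  rw [← hA.apply i k]; ring

lemma continuous_qf (A : Matrix (Fin n) (Fin n) ℝ) : Continuous (qf A) := by
  unfold qf
  exact continuous_finset_sum _ fun i _ => continuous_finset_sum _ fun j _ =>
    (continuous_const.mul (continuous_apply i)).mul (continuous_apply j)

lemma continuous_mv (A : Matrix (Fin n) (Fin n) ℝ) (i : Fin n) : Continuous (fun x => mv A x i) := by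
  unfold mv
  exact continuous_finset_sum _ fun k _ => continuous_const.mul (continuous_apply k)

lemma continuous_mnr (A B : Matrix (Fin n) (Fin n) ℝ) (i j : Fin n) :
    Continuous (fun x => mnr A B x i j) :=
  ((continuous_mv A i).mul (continuous_mv B j)).sub ((continuous_mv A j).mul (continuous_mv B i))

/-- a symmetric matrix whose quadratic form vanishes is zero -/
lemma eq_zero_of_qf {A : Matrix (Fin n) (Fin n) ℝ} (hA : A.IsSymm)
    (h : ∀ x, qf A x = 0) : A = 0 := by
  have key : ∀ a b : Fin n, A a a + A a b + A b a + A b b = 0 := by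
    intro a b
    have := h (fun k => (if k = a then (1:ℝ) else 0) + (if k = b then 1 else 0))
    simp only [qf, mul_add, add_mul, mul_ite, ite_mul, mul_one, mul_zero, zero_mul, one_mul,
      Finset.sum_add_distrib, Finset.sum_ite_eq', Finset.mem_univ, if_true, zero_add,
      add_zero] at this
    linarith [this]
  have hd : ∀ a : Fin n, A a a = 0 := by
    intro a; have := key a a; linarith
  ext i j
  have h4 : A j i = A i j := Matrix.IsSymm.apply hA i j
  have := key i j
  rw [hd i, hd j] at this
  simp only [Matrix.zero_apply]
  linarith


lemma qf_matrix_sub (A B : Matrix (Fin n) (Fin n) ℝ) (c : ℝ) (x : Fin n → ℝ) :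
    qf (B - c • A) x = qf B x - c * qf A x := by
  simp only [qf, Matrix.sub_apply, Matrix.smul_apply, smul_eq_mul, Finset.mul_sum,
    ← Finset.sum_sub_distrib]
  congr 1; ext i; congr 1; ext j; ring

lemma exists_mnr_ne {A B : Matrix (Fin n) (Fin n) ℝ} (hA : A.IsSymm) (hB : B.IsSymm)
    (h : (∑ i, ∑ j, A i j * B i j)^2 < (∑ i, ∑ j, A i j * A i j) * (∑ i, ∑ j, B i j * B i j)) :
    ∃ u i j, mnr A B u i j ≠ 0 := by
  by_contra h0
  push_neg at h0
  have hm : ∀ (x : Fin n → ℝ) i j, mv A x i * mv B x j = mv A x j * mv B x i := by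
    intro x i j
    have := h0 x i j
    unfold mnr at this
    linarith
  -- pointwise vector identity
  have ptw : ∀ (x : Fin n → ℝ) i, qf B x * mv A x i = qf A x * mv B x i := by
    intro x i
    rw [qf_eq_sum_mv, qf_eq_sum_mv, Finset.sum_mul, Finset.sum_mul]
    congr 1; ext j
    linear_combination x j * hm x i j
  have key : ∀ (x y : Fin n → ℝ),
      qf B x * (∑ k, mv A x k * y k) = qf A x * (∑ k, mv B x k * y k) := by
    intro x y
    rw [Finset.mul_sum, Finset.mul_sum]
    congr 1; ext k
    linear_combination y k * ptw x k
  by_cases hqa : ∀ x, qf A x = 0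
  · have hA0 : A = 0 := eq_zero_of_qf hA hqa
    rw [hA0] at h
    simp at h
  · push_neg at hqa
    obtain ⟨u, hu⟩ := hqa
    have claim : ∀ x, qf B x * qf A u = qf A x * qf B u := by
      intro x
      set g : ℝ → ℝ := fun s => qf B (x + s • u) * qf A u - qf A (x + s • u) * qf B u with hg
      have gcont : Continuous g := by
        have hc : Continuous (fun s : ℝ => x + s • u) :=
          continuous_const.add (continuous_id.smul continuous_const)
        exact (((continuous_qf B).comp hc).mul continuous_const).sub
          (((continuous_qf A).comp hc).mul continuous_const)
      -- the key vanishing for z with S_A z ≠ 0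
      have hz : ∀ z : Fin n → ℝ, (∑ k, mv A z k * u k) ≠ 0 →
          qf B z * qf A u = qf A z * qf B u := by
        intro z hSA
        have k1 := key z u
        have k2 := key u z
        rw [mv_symm hA, mv_symm hB] at k2
        -- k1 : qB z * SA = qA z * SB ; k2 : qB u * SA = qA u * SB   (SA = ∑ mv A z k * u k)
        have : (qf B z * qf A u - qf A z * qf B u) * (∑ k, mv A z k * u k) = 0 := by
          linear_combination qf A u * k1 - qf A z * k2
        rcases mul_eq_zero.1 this with h' | h'
        · linarith
        · exact absurd h' hSA
      have hSA : ∀ s : ℝ, (∑ k, mv A (x + s • u) k * u k)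
          = (∑ k, mv A x k * u k) + s * qf A u := by
        intro s
        rw [qf_eq_sum_mv, Finset.mul_sum, ← Finset.sum_add_distrib]
        congr 1; ext k
        rw [mv_add, mv_smul]; ring
      set s₀ : ℝ := -(∑ k, mv A x k * u k) / qf A u with hs₀
      have hg0 : ∀ s, s ≠ s₀ → g s = 0 := by
        intro s hs
        have hSAne : (∑ k, mv A (x + s • u) k * u k) ≠ 0 := by
          rw [hSA]
          intro hcon
          apply hs
          rw [hs₀]
          field_simp
          linarith
        have := hz _ hSAne
        simp only [hg]
        linarith
      have : g = fun _ => 0 := by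
        apply Continuous.ext_on (dense_compl_singleton s₀) gcont continuous_const
        intro s hs
        exact hg0 s hs
      have h00 := congrFun this 0
      simp only [hg, zero_smul, add_zero] at h00
      linarith
    -- B = c • A
    set c : ℝ := qf B u / qf A u with hc
    have hBc : B = c • A := by
      have : B - c • A = 0 := by
        apply eq_zero_of_qf (hB.sub (hA.smul c))
        intro x
        rw [qf_matrix_sub]
        have := claim x
        rw [hc]
        field_simp
        linarith
      linear_combination (norm := module) this
    rw [hBc] at h
    simp only [Matrix.smul_apply, smul_eq_mul] at h
    have e1 : (∑ i, ∑ j, A i j * (c * A i j)) = c * ∑ i, ∑ j, A i j * A i j := by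
      rw [Finset.mul_sum]; congr 1; ext i; rw [Finset.mul_sum]; congr 1; ext j; ring
    have e2 : (∑ i, ∑ j, (c * A i j) * (c * A i j)) = c^2 * ∑ i, ∑ j, A i j * A i j := by
      rw [Finset.mul_sum]; congr 1; ext i; rw [Finset.mul_sum]; congr 1; ext j; ring
    rw [e1] at h
    have e2' : (∑ i, ∑ j, c * A i j * (c * A i j)) = c^2 * ∑ i, ∑ j, A i j * A i j := e2
    rw [e2'] at h
    nlinarith [h]


lemma mnr_expand (A B : Matrix (Fin n) (Fin n) ℝ) (x u : Fin n → ℝ) (i j : Fin n) (t : ℝ) :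
    mnr A B (x + t • u) i j = mnr A B x i j
      + t * (mv A x i * mv B u j + mv A u i * mv B x j
            - mv A x j * mv B u i - mv A u j * mv B x i)
      + t^2 * mnr A B u i j := by
  simp only [mnr, mv_add, mv_smul]
  ring

lemma insertNth_decomp (m : ℕ) (c : Fin (m+1)) (t : ℝ) (w : Fin m → ℝ) :
    (Fin.insertNth c t w : Fin (m+1) → ℝ)
      = (Fin.insertNth c (0:ℝ) w : Fin (m+1) → ℝ) + t • (Pi.single c (1:ℝ) : Fin (m+1) → ℝ) := by
  funext k
  refine Fin.succAboveCases c ?_ ?_ k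
  · simp
  · intro k'
    simp [Fin.insertNth_apply_succAbove, Pi.single_apply, (Fin.succAbove_ne c k')]

/-- the zero set of a not-identically-zero minor is Lebesgue-null -/
lemma null_mnr_zero {m : ℕ} (A B : Matrix (Fin (m+1)) (Fin (m+1)) ℝ) (u : Fin (m+1) → ℝ)
    (i j : Fin (m+1)) (hu : mnr A B u i j ≠ 0) :
    volume {x : Fin (m+1) → ℝ | mnr A B x i j = 0} = 0 := by
  classical
  have hu0 : u ≠ 0 := by
    intro h0
    apply hu
    rw [h0]
    simp [mnr, mv]
  obtain ⟨c, hc⟩ := Function.ne_iff.1 hu0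
  simp only [Pi.zero_apply] at hc
  set v : Fin (m+1) → ℝ := u - Pi.single c 1 with hv
  -- the shear
  set T : (Fin (m+1) → ℝ) ≃ₗ[ℝ] (Fin (m+1) → ℝ) :=
    { toFun := fun y => y + (y c) • v
      map_add' := by
        intro y z
        simp only [Pi.add_apply, add_smul]
        abel
      map_smul' := by
        intro r y
        simp only [Pi.smul_apply, smul_eq_mul, RingHom.id_apply, smul_add, smul_smul]
      invFun := fun z => z - (z c / u c) • v
      left_inv := by
        intro y
        have h1 : (y + y c • v) c = y c * u c := by
          simp only [Pi.add_apply, Pi.smul_apply, hv, Pi.sub_apply, Pi.single_eq_same,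
            smul_eq_mul]
          ring
        simp only [h1]
        rw [mul_div_assoc, div_self hc, mul_one]
        abel
      right_inv := by
        intro z
        have h1 : (z - (z c / u c) • v) c = z c / u c := by
          simp only [Pi.sub_apply, Pi.smul_apply, hv, Pi.single_eq_same, smul_eq_mul]
          field_simp
          ring
        simp only [h1]
        abel } with hT
  have hTapp : ∀ y, T y = y + (y c) • v := fun _ => rfl
  have hTsingle : T (Pi.single c 1) = u := by
    rw [hTapp]
    simp [hv, Pi.single_eq_same]
  set Z : Set (Fin (m+1) → ℝ) := {x | mnr A B x i j = 0} with hZ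
  set W : Set (Fin (m+1) → ℝ) := ⇑T ⁻¹' Z with hW
  have hTcont : Continuous (⇑T) := LinearMap.continuous_of_finiteDimensional T.toLinearMap
  have hWmeas : MeasurableSet W := by
    have : Continuous fun y => mnr A B (T y) i j := (continuous_mnr A B i j).comp hTcont
    exact (isClosed_singleton.preimage this).measurableSet
  have hWnull : volume W = 0 := by
    set e := MeasurableEquiv.piFinSuccAbove (fun _ : Fin (m+1) => ℝ) c with he
    have mp := measurePreserving_piFinSuccAbove (fun _ : Fin (m+1) => (volume : Measure ℝ)) c
    set S' : Set (ℝ × (Fin m → ℝ)) := ⇑e.symm ⁻¹' W with hS'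
    have hS'meas : MeasurableSet S' := e.symm.measurable hWmeas
    have hWe : W = ⇑e ⁻¹' S' := by
      ext y
      simp [hS', MeasurableEquiv.symm_apply_apply]
    rw [hWe, volume_pi, mp.measure_preimage hS'meas.nullMeasurableSet]
    -- now a product measure computation
    have hswap : ((volume : Measure ℝ).prod (Measure.pi fun _ : Fin m => (volume : Measure ℝ))) S'
        = ((Measure.pi fun _ : Fin m => (volume : Measure ℝ)).prod (volume : Measure ℝ))
            (Prod.swap ⁻¹' S') := by
      rw [← Measure.prod_swap, Measure.map_apply measurable_swap hS'meas]
    rw [hswap]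
    rw [Measure.measure_prod_null (measurable_swap hS'meas)]
    refine Filter.Eventually.of_forall fun w => ?_
    simp only [Pi.zero_apply]
    have hslice : (Prod.mk w ⁻¹' (Prod.swap ⁻¹' S'))
        = {t : ℝ | mnr A B (T (Fin.insertNth c t w)) i j = 0} := by
      ext t
      simp only [Set.mem_preimage, Prod.swap_prod_mk, hS', Set.mem_preimage, hW, hZ,
        Set.mem_setOf_eq]
      rfl
    rw [hslice]
    -- each slice is contained in the roots of a nonzero polynomial of degree 2
    set x₁ : Fin (m+1) → ℝ := T (Fin.insertNth c (0:ℝ) w) with hx₁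
    have hline : ∀ t : ℝ, T (Fin.insertNth c t w) = x₁ + t • u := by
      intro t
      rw [insertNth_decomp m c t w, T.map_add, T.map_smul, hTsingle, hx₁]
    set cr : ℝ := mv A x₁ i * mv B u j + mv A u i * mv B x₁ j
            - mv A x₁ j * mv B u i - mv A u j * mv B x₁ i with hcr
    set p : Polynomial ℝ := Polynomial.C (mnr A B x₁ i j) + Polynomial.C cr * Polynomial.X
      + Polynomial.C (mnr A B u i j) * Polynomial.X ^ 2 with hp
    have hpne : p ≠ 0 := by
      intro h0
      apply hu
      have := congrArg (fun q => Polynomial.coeff q 2) h0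
      simpa [hp, Polynomial.coeff_add, Polynomial.coeff_C,
        Polynomial.coeff_C_mul, Polynomial.coeff_X_pow, Polynomial.coeff_X] using this
    refine measure_mono_null (fun t ht => ?_) ((p.finite_setOf_isRoot hpne).measure_zero _)
    simp only [Set.mem_setOf_eq] at ht ⊢
    rw [hline t, mnr_expand] at ht
    simp only [Polynomial.IsRoot, hp, Polynomial.eval_add, Polynomial.eval_mul,
      Polynomial.eval_C, Polynomial.eval_X, Polynomial.eval_pow]
    simp only [hcr]
    linear_combination ht
  -- transfer back through the shear
  have hdet : LinearMap.det ((T.symm : (Fin (m+1) → ℝ) ≃ₗ[ℝ] (Fin (m+1) → ℝ)) :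
      (Fin (m+1) → ℝ) →ₗ[ℝ] (Fin (m+1) → ℝ)) ≠ 0 :=
    (LinearEquiv.isUnit_det' T.symm).ne_zero
  have hZW : Z = ⇑((T.symm : (Fin (m+1) → ℝ) ≃ₗ[ℝ] (Fin (m+1) → ℝ)) :
      (Fin (m+1) → ℝ) →ₗ[ℝ] (Fin (m+1) → ℝ)) ⁻¹' W := by
    ext x
    simp only [Set.mem_preimage, LinearEquiv.coe_coe, hW, Set.mem_preimage,
      LinearEquiv.apply_symm_apply]
  rw [hZW, Measure.addHaar_preimage_linearMap volume hdet, hWnull, mul_zero]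


/-- a cylinder over a planar null set is null -/
lemma null_pair_coords {m : ℕ} (i j : Fin (m+1)) (hij : i ≠ j) (S : Set (ℝ × ℝ))
    (hS : MeasurableSet S) (h0 : volume S = 0) :
    volume {y : Fin (m+1) → ℝ | (y i, y j) ∈ S} = 0 := by
  obtain ⟨j', hj'⟩ := Fin.exists_succAbove_eq (show j ≠ i from hij.symm)
  set e := MeasurableEquiv.piFinSuccAbove (fun _ : Fin (m+1) => ℝ) i with he
  have mp := measurePreserving_piFinSuccAbove (fun _ : Fin (m+1) => (volume : Measure ℝ)) i
  set S' : Set (ℝ × (Fin m → ℝ)) := {p | (p.1, p.2 j') ∈ S} with hS'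
  have hS'meas : MeasurableSet S' :=
    (measurable_fst.prodMk ((measurable_pi_apply j').comp measurable_snd)) hS
  have hWe : {y : Fin (m+1) → ℝ | (y i, y j) ∈ S} = ⇑e ⁻¹' S' := by
    ext y
    have : e y = (y i, fun k => y (i.succAbove k)) := rfl
    simp only [Set.mem_preimage, this, hS', Set.mem_setOf_eq, hj']
  rw [hWe, volume_pi, mp.measure_preimage hS'meas.nullMeasurableSet,
    Measure.measure_prod_null hS'meas]
  have hae : ∀ᵐ t : ℝ, volume (Prod.mk t ⁻¹' S) = 0 := by
    rw [Measure.volume_eq_prod] at h0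
    have := (Measure.measure_prod_null hS).1 h0
    filter_upwards [this] with t ht
    simpa using ht
  filter_upwards [hae] with t ht
  have hsl : (Prod.mk t ⁻¹' S') = Function.eval j' ⁻¹' (Prod.mk t ⁻¹' S) := by
    ext w
    simp [hS', Function.eval]
  simp only [Pi.zero_apply, hsl]
  exact Measure.pi_eval_preimage_null _ ht

/-- the standard Gaussian product measure is absolutely continuous wrt Lebesgue -/
lemma gaussianPi_ac : ∀ k : ℕ,
    (Measure.pi fun _ : Fin k => gaussianReal 0 1) ≪ (Measure.pi fun _ : Fin k => (volume : Measure ℝ)) := by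
  intro k
  induction k with
  | zero =>
      rw [Measure.pi_of_empty, Measure.pi_of_empty]
  | succ k ih =>
      set e := MeasurableEquiv.piFinSuccAbove (fun _ : Fin (k+1) => ℝ) 0 with he
      have mpg := measurePreserving_piFinSuccAbove (fun _ : Fin (k+1) => gaussianReal 0 1) 0
      have mpv := measurePreserving_piFinSuccAbove (fun _ : Fin (k+1) => (volume : Measure ℝ)) 0
      have h1 : (Measure.pi fun _ : Fin (k+1) => gaussianReal 0 1)
          = Measure.map (⇑e.symm) ((gaussianReal 0 1).prod (Measure.pi fun _ : Fin k => gaussianReal 0 1)) :=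
        (mpg.symm e).map_eq.symm
      have h2 : (Measure.pi fun _ : Fin (k+1) => (volume : Measure ℝ))
          = Measure.map (⇑e.symm) ((volume : Measure ℝ).prod (Measure.pi fun _ : Fin k => (volume : Measure ℝ))) :=
        (mpv.symm e).map_eq.symm
      rw [h1, h2]
      exact ((gaussianReal_absolutelyContinuous 0 one_ne_zero).prod ih).map e.symm.measurable


open ContinuousLinearMap in
/-- the gradient of the quadratic form as a continuous linear functional -/
noncomputable def dgrad (A : Matrix (Fin n) (Fin n) ℝ) (x : Fin n → ℝ) : (Fin n → ℝ) →L[ℝ] ℝ :=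
  ∑ k, (2 * mv A x k) • (ContinuousLinearMap.proj k : (Fin n → ℝ) →L[ℝ] ℝ)

lemma dgrad_apply (A : Matrix (Fin n) (Fin n) ℝ) (x v : Fin n → ℝ) :
    dgrad A x v = ∑ k, 2 * mv A x k * v k := by
  simp [dgrad, ContinuousLinearMap.sum_apply, ContinuousLinearMap.proj_apply]

lemma dgrad_add (A : Matrix (Fin n) (Fin n) ℝ) (x y : Fin n → ℝ) :
    dgrad A (x + y) = dgrad A x + dgrad A y := by
  ext v
  simp only [dgrad_apply, ContinuousLinearMap.add_apply, mv_add, ← Finset.sum_add_distrib]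
  congr 1; ext k; ring

lemma dgrad_smul (A : Matrix (Fin n) (Fin n) ℝ) (c : ℝ) (x : Fin n → ℝ) :
    dgrad A (c • x) = c • dgrad A x := by
  ext v
  simp only [dgrad_apply, ContinuousLinearMap.smul_apply, mv_smul, Finset.smul_sum,
    smul_eq_mul, Finset.mul_sum]
  congr 1; ext k; ring

lemma hasStrictFDerivAt_qf {A : Matrix (Fin n) (Fin n) ℝ} (hA : A.IsSymm) (x : Fin n → ℝ) :
    HasStrictFDerivAt (qf A) (dgrad A x) x := by
  classical
  have hterm : ∀ i j : Fin n, HasStrictFDerivAt (fun y : Fin n → ℝ => A i j * y i * y j)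
      ((A i j * x i) • (ContinuousLinearMap.proj j : (Fin n → ℝ) →L[ℝ] ℝ)
        + x j • (A i j • (ContinuousLinearMap.proj i : (Fin n → ℝ) →L[ℝ] ℝ))) x := by
    intro i j
    have hi : HasStrictFDerivAt (fun y : Fin n → ℝ => A i j * y i)
        (A i j • (ContinuousLinearMap.proj i : (Fin n → ℝ) →L[ℝ] ℝ)) x :=
      ((ContinuousLinearMap.proj i : (Fin n → ℝ) →L[ℝ] ℝ).hasStrictFDerivAt).const_mul (A i j)
    have hj : HasStrictFDerivAt (fun y : Fin n → ℝ => y j)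
        (ContinuousLinearMap.proj j : (Fin n → ℝ) →L[ℝ] ℝ) x :=
      (ContinuousLinearMap.proj j : (Fin n → ℝ) →L[ℝ] ℝ).hasStrictFDerivAt
    have := hi.mul hj
    simpa [Pi.mul_def, mul_assoc] using this
  have hsum : HasStrictFDerivAt (qf A)
      (∑ i, ∑ j, ((A i j * x i) • (ContinuousLinearMap.proj j : (Fin n → ℝ) →L[ℝ] ℝ)
        + x j • (A i j • (ContinuousLinearMap.proj i : (Fin n → ℝ) →L[ℝ] ℝ)))) x := by
    have : HasStrictFDerivAt (fun y => ∑ i, ∑ j, A i j * y i * y j)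
        (∑ i, ∑ j, ((A i j * x i) • (ContinuousLinearMap.proj j : (Fin n → ℝ) →L[ℝ] ℝ)
          + x j • (A i j • (ContinuousLinearMap.proj i : (Fin n → ℝ) →L[ℝ] ℝ)))) x :=
      HasStrictFDerivAt.fun_sum fun i _ => HasStrictFDerivAt.fun_sum fun j _ => hterm i j
    exact this
  refine hsum.congr_fderiv ?_; symm
  ext v
  simp only [dgrad_apply, ContinuousLinearMap.sum_apply, ContinuousLinearMap.add_apply,
    ContinuousLinearMap.smul_apply, ContinuousLinearMap.proj_apply, smul_eq_mul]
  have step1 : ∀ i : Fin n, ∑ j, (A i j * x i * v j + x j * (A i j * v i))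
      = (∑ j, A i j * x i * v j) + mv A x i * v i := by
    intro i
    rw [Finset.sum_add_distrib]
    congr 1
    rw [mv, Finset.sum_mul]
    congr 1; ext jj; ring
  rw [Finset.sum_congr rfl fun i _ => step1 i, Finset.sum_add_distrib]
  have step2 : (∑ i, ∑ j, A i j * x i * v j) = ∑ k, mv A x k * v k := by
    rw [Finset.sum_comm]
    congr 1; ext j
    rw [mv, Finset.sum_mul]
    congr 1; ext i
    rw [← hA.apply j i]
  rw [step2, ← Finset.sum_add_distrib]
  congr 1; ext k; ring

open ContinuousLinearMap in
/-- derivative of the auxiliary map Ψ -/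
noncomputable def dfam (A B : Matrix (Fin n) (Fin n) ℝ) (i j : Fin n) (x : Fin n → ℝ) :
    (Fin n → ℝ) →L[ℝ] (Fin n → ℝ) :=
  ContinuousLinearMap.pi (fun k => if k = i then dgrad A x else if k = j then dgrad B x
    else (ContinuousLinearMap.proj k : (Fin n → ℝ) →L[ℝ] ℝ))

open ContinuousLinearMap in
/-- the `x`-dependent part of `dfam` as a linear map, for continuity -/
noncomputable def dfamLin (A B : Matrix (Fin n) (Fin n) ℝ) (i j : Fin n) :
    (Fin n → ℝ) →ₗ[ℝ] ((Fin n → ℝ) →L[ℝ] (Fin n → ℝ)) where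
  toFun x := ContinuousLinearMap.pi (fun k => if k = i then dgrad A x else if k = j then dgrad B x
    else 0)
  map_add' x y := by
    ext v k
    simp only [ContinuousLinearMap.pi_apply, ContinuousLinearMap.add_apply, Pi.add_apply]
    split_ifs <;> simp [dgrad_add]
  map_smul' c x := by
    ext v k
    simp only [ContinuousLinearMap.pi_apply, ContinuousLinearMap.coe_smul', Pi.smul_apply,
      RingHom.id_apply, smul_eq_mul]
    split_ifs <;> simp [dgrad_smul]

open ContinuousLinearMap in
lemma dfam_eq (A B : Matrix (Fin n) (Fin n) ℝ) (i j : Fin n) (x : Fin n → ℝ) :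
    dfam A B i j x = ContinuousLinearMap.pi (fun k => if k = i then 0 else if k = j then 0
      else (ContinuousLinearMap.proj k : (Fin n → ℝ) →L[ℝ] ℝ)) + dfamLin A B i j x := by
  ext v k
  by_cases hk : k = i
  · simp [dfam, dfamLin, hk]
  · by_cases hk' : k = j
    · simp [dfam, dfamLin, hk, hk']
    · simp [dfam, dfamLin, hk, hk']

lemma continuous_dfam_det (A B : Matrix (Fin n) (Fin n) ℝ) (i j : Fin n) :
    Continuous (fun x => (dfam A B i j x).det) := by
  have h1 : Continuous (fun x => dfam A B i j x) := by
    have : Continuous (⇑(dfamLin A B i j)) :=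
      LinearMap.continuous_of_finiteDimensional (dfamLin A B i j)
    have h2 : Continuous (fun x => ContinuousLinearMap.pi
        (fun k => if k = i then (0 : (Fin n → ℝ) →L[ℝ] ℝ) else if k = j then 0
          else (ContinuousLinearMap.proj k : (Fin n → ℝ) →L[ℝ] ℝ)) + dfamLin A B i j x) :=
      continuous_const.add this
    convert h2 using 1
    funext x
    exact dfam_eq A B i j x
  exact ContinuousLinearMap.continuous_det.comp h1


lemma hard_core {n : ℕ} {A B : Matrix (Fin n) (Fin n) ℝ} (hA : A.IsSymm) (hB : B.IsSymm)
    (hlt : (∑ i, ∑ j, A i j * B i j)^2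
      < (∑ i, ∑ j, A i j * A i j) * (∑ i, ∑ j, B i j * B i j))
    (S : Set (ℝ × ℝ)) (hS : MeasurableSet S) (h0 : volume S = 0) :
    volume ((fun x : Fin n → ℝ => (qf A x - A.trace, qf B x - B.trace)) ⁻¹' S) = 0 := by
  classical
  obtain ⟨u, i, j, hmnr⟩ := exists_mnr_ne hA hB hlt
  have hij : i ≠ j := by
    rintro rfl
    exact hmnr (by unfold mnr; ring)
  cases n with
  | zero => exact i.elim0
  | succ m =>
  set φ : (Fin (m+1) → ℝ) → ℝ × ℝ := fun x => (qf A x - A.trace, qf B x - B.trace) with hφ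
  have hφcont : Continuous φ :=
    ((continuous_qf A).sub continuous_const).prodMk ((continuous_qf B).sub continuous_const)
  set Ψ : (Fin (m+1) → ℝ) → (Fin (m+1) → ℝ) := fun x k =>
    if k = i then qf A x - A.trace else if k = j then qf B x - B.trace else x k with hΨ
  have hΨstrict : ∀ x, HasStrictFDerivAt Ψ (dfam A B i j x) x := by
    intro x
    apply hasStrictFDerivAt_pi''
    intro k
    rw [dfam, ContinuousLinearMap.proj_pi]
    by_cases hk : k = i
    · subst hk
      simp only [if_pos rfl]
      have hfun : (fun y => Ψ y k) = fun y => qf A y - A.trace := by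
        funext y; simp [hΨ]
      rw [hfun]
      exact (hasStrictFDerivAt_qf hA x).sub_const _
    · by_cases hk' : k = j
      · subst hk'
        simp only [if_neg hk, if_pos rfl]
        have hfun : (fun y => Ψ y k) = fun y => qf B y - B.trace := by
          funext y; simp [hΨ, hk]
        rw [hfun]
        exact (hasStrictFDerivAt_qf hB x).sub_const _
      · simp only [if_neg hk, if_neg hk']
        have hfun : (fun y => Ψ y k) = fun y => y k := by
          funext y; simp [hΨ, hk, hk']
        rw [hfun]
        exact (ContinuousLinearMap.proj k :
          (Fin (m+1) → ℝ) →L[ℝ] ℝ).hasStrictFDerivAt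
  have hdetne : ∀ x, mnr A B x i j ≠ 0 → (dfam A B i j x).det ≠ 0 := by
    intro x hx hd0
    have hker : ∀ v, dfam A B i j x v = 0 → v = 0 := by
      intro v hv
      have hco : ∀ k, dfam A B i j x v k = 0 := fun k => congrFun hv k
      have hvo : ∀ k, k ≠ i → k ≠ j → v k = 0 := by
        intro k hk hk'
        have := hco k
        simpa [dfam, ContinuousLinearMap.pi_apply, hk, hk'] using this
    -- the two gradient equations
      have hsumred : ∀ g : Fin (m+1) → ℝ,
          (∑ k, 2 * g k * v k) = 2 * g i * v i + 2 * g j * v j := by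
        intro g
        rw [← Finset.sum_pair (f := fun k => 2 * g k * v k) hij]
        symm
        apply Finset.sum_subset (Finset.subset_univ _)
        intro k _ hk
        simp only [Finset.mem_insert, Finset.mem_singleton] at hk
        push_neg at hk
        rw [hvo k hk.1 hk.2, mul_zero]
      have e1 : 2 * mv A x i * v i + 2 * mv A x j * v j = 0 := by
        have := hco i
        rw [show dfam A B i j x v i = dgrad A x v from by simp [dfam],
          dgrad_apply, hsumred] at this
        exact this
      have e2 : 2 * mv B x i * v i + 2 * mv B x j * v j = 0 := by
        have := hco j
        rw [show dfam A B i j x v j = dgrad B x v from by simp [dfam, Ne.symm hij],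
          dgrad_apply, hsumred] at this
        exact this
      have hvi : v i = 0 := by
        have h4 : mnr A B x i j * (4 * v i) = 0 := by
          unfold mnr
          linear_combination (2 * mv B x j) * e1 - (2 * mv A x j) * e2
        rcases mul_eq_zero.1 h4 with h' | h'
        · exact absurd h' hx
        · linarith
      have hvj : v j = 0 := by
        have h4 : mnr A B x i j * (4 * v j) = 0 := by
          unfold mnr
          linear_combination (2 * mv A x i) * e2 - (2 * mv B x i) * e1
        rcases mul_eq_zero.1 h4 with h' | h'
        · exact absurd h' hx
        · linarith
      funext k
      by_cases hk : k = i
      · rw [hk]; exact hvi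
      · by_cases hk' : k = j
        · rw [hk']; exact hvj
        · exact hvo k hk hk'
    have hinj : Function.Injective
        ((dfam A B i j x : (Fin (m+1) → ℝ) →L[ℝ] (Fin (m+1) → ℝ)) :
          (Fin (m+1) → ℝ) →ₗ[ℝ] (Fin (m+1) → ℝ)) := by
      rw [← LinearMap.ker_eq_bot]
      rw [LinearMap.ker_eq_bot']
      intro w hw
      exact hker w hw
    have hsurj := LinearMap.injective_iff_surjective.1 hinj
    have hrange := LinearMap.range_lt_top_of_det_eq_zero hd0
    rw [LinearMap.range_eq_top.2 hsurj] at hrange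
    exact lt_irrefl _ hrange
  -- the good open set and the bad null set
  set U : Set (Fin (m+1) → ℝ) := {x | mnr A B x i j ≠ 0} with hU
  have hUopen : IsOpen U := isOpen_compl_singleton.preimage (continuous_mnr A B i j)
  have hZnull : volume {x : Fin (m+1) → ℝ | mnr A B x i j = 0} = 0 :=
    null_mnr_zero A B u i j hmnr
  -- local injectivity neighbourhoods
  have hloc : ∀ x : {x : Fin (m+1) → ℝ // mnr A B x i j ≠ 0},
      ∃ V : Set (Fin (m+1) → ℝ), IsOpen V ∧ ↑x ∈ V ∧ Set.InjOn Ψ V := by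
    rintro ⟨x, hx⟩
    have hdx := hdetne x hx
    set eL := (dfam A B i j x).toContinuousLinearEquivOfDetNeZero hdx with heL
    have hstrict' : HasStrictFDerivAt Ψ (↑eL :
        (Fin (m+1) → ℝ) →L[ℝ] (Fin (m+1) → ℝ)) x := by
      rw [heL, ContinuousLinearMap.coe_toContinuousLinearEquivOfDetNeZero]
      exact hΨstrict x
    set ph := hstrict'.toOpenPartialHomeomorph Ψ with hph
    refine ⟨ph.source, ph.open_source, hstrict'.mem_toOpenPartialHomeomorph_source, ?_⟩
    have := ph.injOn
    rwa [hph, HasStrictFDerivAt.toOpenPartialHomeomorph_coe] at this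
  choose V hVopen hVmem hVinj using hloc
  obtain ⟨Tset, hTcnt, hTeq⟩ := TopologicalSpace.isOpen_iUnion_countable V hVopen
  have hUcover : U ⊆ ⋃ x ∈ Tset, V x := by
    intro y hy
    rw [hTeq]
    exact Set.mem_iUnion.2 ⟨⟨y, hy⟩, hVmem ⟨y, hy⟩⟩
  -- decomposition
  have hsub : φ ⁻¹' S ⊆ {x : Fin (m+1) → ℝ | mnr A B x i j = 0}
      ∪ ⋃ x ∈ Tset, (φ ⁻¹' S ∩ U ∩ V x) := by
    intro y hy
    by_cases hzy : mnr A B y i j = 0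
    · exact Or.inl hzy
    · right
      have hyU : y ∈ U := hzy
      obtain ⟨x, hxT, hyV⟩ := Set.mem_iUnion₂.1 (hUcover hyU)
      exact Set.mem_iUnion₂.2 ⟨x, hxT, ⟨hy, hyU⟩, hyV⟩
  refine measure_mono_null hsub (measure_union_null hZnull ?_)
  rw [measure_biUnion_null_iff hTcnt]
  intro x hxT
  set s' : Set (Fin (m+1) → ℝ) := φ ⁻¹' S ∩ U ∩ V x with hs'
  have hs'meas : MeasurableSet s' :=
    ((hφcont.measurable hS).inter hUopen.measurableSet).inter (hVopen x).measurableSet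
  have himage : Ψ '' s' ⊆ {z : Fin (m+1) → ℝ | (z i, z j) ∈ S} := by
    rintro _ ⟨y, hy, rfl⟩
    have hyS : φ y ∈ S := hy.1.1
    have h1 : Ψ y i = qf A y - A.trace := by simp [hΨ]
    have h2 : Ψ y j = qf B y - B.trace := by simp [hΨ, Ne.symm hij]
    simp only [Set.mem_setOf_eq, h1, h2]
    exact hyS
  have himnull : volume (Ψ '' s') = 0 :=
    measure_mono_null himage (null_pair_coords i j hij S hS h0)
  have hint : ∫⁻ y in s', ENNReal.ofReal |(dfam A B i j y).det| ∂volume = 0 := by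
    refine le_antisymm (le_trans ?_ himnull.le) (zero_le)
    exact lintegral_abs_det_fderiv_le_addHaar_image volume hs'meas
      (fun y _ => (hΨstrict y).hasFDerivAt.hasFDerivWithinAt)
      ((hVinj x).mono (fun y hy => hy.2))
  have hintmeas : Measurable fun y => ENNReal.ofReal |(dfam A B i j y).det| :=
    ((continuous_dfam_det A B i j).abs.measurable).ennreal_ofReal
  rw [setLIntegral_eq_zero_iff hs'meas hintmeas] at hint
  rw [MeasureTheory.ae_iff] at hint
  refine measure_mono_null ?_ hint
  intro y hy
  simp only [Set.mem_setOf_eq]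
  intro himp
  have h0' := himp hy
  rw [ENNReal.ofReal_eq_zero] at h0'
  have : (dfam A B i j y).det ≠ 0 := hdetne y hy.1.2
  have habs : |(dfam A B i j y).det| > 0 := abs_pos.2 this
  linarith


lemma sum2_expand (P Q : Matrix (Fin n) (Fin n) ℝ) (a b : ℝ) :
    ∑ i, ∑ j, (a * P i j + b * Q i j)^2
      = a^2 * (∑ i, ∑ j, P i j * P i j) + 2*a*b*(∑ i, ∑ j, P i j * Q i j)
        + b^2 * (∑ i, ∑ j, Q i j * Q i j) := by
  rw [Finset.mul_sum, Finset.mul_sum, Finset.mul_sum, ← Finset.sum_add_distrib,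
    ← Finset.sum_add_distrib]
  refine Finset.sum_congr rfl fun i _ => ?_
  rw [Finset.mul_sum, Finset.mul_sum, Finset.mul_sum, ← Finset.sum_add_distrib,
    ← Finset.sum_add_distrib]
  refine Finset.sum_congr rfl fun j _ => ?_
  ring

end Stmt14

/-- For `F = (I₂(f), I₂(g))` with covariance matrix `C`, the law of `F` is absolutely
continuous with respect to Lebesgue measure on `ℝ²` iff `det C > 0`. Here the second
Wiener chaos is realized concretely: `f, g ∈ H^{⊙2}` are symmetric matrices `A, B`
(`H = ℝ^n`), `G` is a standard Gaussian vector, `I₂(A) = ⟨G, A G⟩ − tr A`, and the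
covariance matrix has entries `2⟨A,A⟩, 2⟨A,B⟩, 2⟨B,B⟩` (Hilbert–Schmidt inner
products). -/
theorem stmt14 {Ω : Type*} [MeasureSpace Ω] [IsProbabilityMeasure (ℙ : Measure Ω)]
    {n : ℕ} (G : Ω → (Fin n → ℝ)) (hGmeas : Measurable G)
    (hGlaw : Measure.map G ℙ = Measure.pi fun _ => gaussianReal 0 1)
    (A B : Matrix (Fin n) (Fin n) ℝ) (hA : A.IsSymm) (hB : B.IsSymm)
    (F₁ F₂ : Ω → ℝ)
    (hF₁ : ∀ ω, F₁ ω = (∑ i, ∑ j, A i j * G ω i * G ω j) - A.trace)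
    (hF₂ : ∀ ω, F₂ ω = (∑ i, ∑ j, B i j * G ω i * G ω j) - B.trace)
    (C : Matrix (Fin 2) (Fin 2) ℝ)
    (hC : C = !![2 * ∑ i, ∑ j, A i j * A i j, 2 * ∑ i, ∑ j, A i j * B i j;
                 2 * ∑ i, ∑ j, A i j * B i j, 2 * ∑ i, ∑ j, B i j * B i j]) :
    (Measure.map (fun ω => (F₁ ω, F₂ ω)) ℙ ≪ (volume : Measure (ℝ × ℝ))) ↔ 0 < C.det := by
  classical
  set PAA : ℝ := ∑ i, ∑ j, A i j * A i j with hPAAdef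
  set PAB : ℝ := ∑ i, ∑ j, A i j * B i j with hPABdef
  set PBB : ℝ := ∑ i, ∑ j, B i j * B i j with hPBBdef
  have hdetC : C.det = 4 * (PAA * PBB - PAB^2) := by
    rw [hC, Matrix.det_fin_two_of]
    ring
  set φ : (Fin n → ℝ) → ℝ × ℝ := fun x => (Stmt14.qf A x - A.trace, Stmt14.qf B x - B.trace) with hφdef
  have hφcont : Continuous φ :=
    ((Stmt14.continuous_qf A).sub continuous_const).prodMk ((Stmt14.continuous_qf B).sub continuous_const)
  have hpair : (fun ω => (F₁ ω, F₂ ω)) = φ ∘ G := by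
    funext ω
    simp only [hφdef, Function.comp_apply, hF₁ ω, hF₂ ω]
    rfl
  have hmeaspair : Measurable fun ω => (F₁ ω, F₂ ω) := by
    rw [hpair]
    exact hφcont.measurable.comp hGmeas
  constructor
  · intro hAC
    by_contra hnot
    push_neg at hnot
    have hCS : PAB^2 ≤ PAA * PBB := by
      have hquad : ∀ t : ℝ, 0 ≤ PAA * (t*t) + (2*PAB) * t + PBB := by
        intro t
        have he := Stmt14.sum2_expand A B t 1
        have hnn : (0:ℝ) ≤ ∑ i, ∑ j, (t * A i j + 1 * B i j)^2 :=
          Finset.sum_nonneg fun i _ => Finset.sum_nonneg fun j _ => sq_nonneg _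
        rw [he] at hnn
        nlinarith [hnn]
      have hd := discrim_le_zero hquad
      rw [discrim] at hd
      nlinarith [hd]
    have hdet0 : PAB^2 = PAA * PBB := by
      have h1 : C.det ≤ 0 := hnot
      rw [hdetC] at h1
      nlinarith [hCS, h1]
    -- obtain a proper submodule containing the law
    have hexists : ∃ Ssub : Submodule ℝ (ℝ × ℝ), Ssub ≠ ⊤ ∧
        ∀ ω, (F₁ ω, F₂ ω) ∈ Ssub := by
      by_cases hPAA : PAA = 0
      · have hAzero : A = 0 := by
          ext i j
          have hnn : ∀ i ∈ Finset.univ, (0:ℝ) ≤ ∑ j, A i j * A i j :=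
            fun i _ => Finset.sum_nonneg fun j _ => mul_self_nonneg _
          have h2 : ∑ j, A i j * A i j = 0 :=
            (Finset.sum_eq_zero_iff_of_nonneg hnn).1 hPAA i (Finset.mem_univ i)
          have h3 : A i j * A i j = 0 :=
            (Finset.sum_eq_zero_iff_of_nonneg fun j _ => mul_self_nonneg _).1 h2 j
              (Finset.mem_univ j)
          simpa using mul_self_eq_zero.1 h3
        refine ⟨LinearMap.ker (LinearMap.fst ℝ ℝ ℝ), ?_, ?_⟩
        · intro htop
          have : ((1:ℝ), (0:ℝ)) ∈ LinearMap.ker (LinearMap.fst ℝ ℝ ℝ) :=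
            htop ▸ Submodule.mem_top
          simp [LinearMap.mem_ker] at this
        · intro ω
          rw [LinearMap.mem_ker]
          simp only [LinearMap.fst_apply]
          rw [hF₁ ω, hAzero]
          simp [Matrix.trace]
      · set c : ℝ := PAB / PAA with hcdef
        have hBc : ∀ i j, B i j = c * A i j := by
          have hkey : c^2 * PAA - 2*c*PAB + PBB = 0 := by
            rw [hcdef]
            field_simp
            nlinarith [hdet0]
          have hzero : ∑ i, ∑ j, ((-c) * A i j + 1 * B i j)^2 = 0 := by
            rw [Stmt14.sum2_expand]
            nlinarith [hkey]
          intro i j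
          have hnn : ∀ i ∈ Finset.univ, (0:ℝ) ≤ ∑ j, ((-c) * A i j + 1 * B i j)^2 :=
            fun i _ => Finset.sum_nonneg fun j _ => sq_nonneg _
          have h2 : ∑ j, ((-c) * A i j + 1 * B i j)^2 = 0 :=
            (Finset.sum_eq_zero_iff_of_nonneg hnn).1 hzero i (Finset.mem_univ i)
          have h3 : ((-c) * A i j + 1 * B i j)^2 = 0 :=
            (Finset.sum_eq_zero_iff_of_nonneg fun j _ => sq_nonneg _).1 h2 j (Finset.mem_univ j)
          have := pow_eq_zero_iff (n := 2) (by norm_num) |>.1 h3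
          linarith [this]
        refine ⟨LinearMap.ker (LinearMap.snd ℝ ℝ ℝ - c • LinearMap.fst ℝ ℝ ℝ), ?_, ?_⟩
        · intro htop
          have : ((1:ℝ), (c+1:ℝ)) ∈
              LinearMap.ker (LinearMap.snd ℝ ℝ ℝ - c • LinearMap.fst ℝ ℝ ℝ) :=
            htop ▸ Submodule.mem_top
          simp only [LinearMap.mem_ker, LinearMap.sub_apply, LinearMap.snd_apply,
            LinearMap.smul_apply, LinearMap.fst_apply, smul_eq_mul] at this
          linarith [this]
        · intro ω
          rw [LinearMap.mem_ker]
          simp only [LinearMap.sub_apply, LinearMap.snd_apply, LinearMap.smul_apply,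
            LinearMap.fst_apply, smul_eq_mul]
          rw [hF₁ ω, hF₂ ω]
          have htr : B.trace = c * A.trace := by
            unfold Matrix.trace Matrix.diag
            rw [Finset.mul_sum]
            exact Finset.sum_congr rfl fun k _ => hBc k k
          have hq : (∑ i, ∑ j, B i j * G ω i * G ω j)
              = c * ∑ i, ∑ j, A i j * G ω i * G ω j := by
            rw [Finset.mul_sum]
            refine Finset.sum_congr rfl fun i _ => ?_
            rw [Finset.mul_sum]
            refine Finset.sum_congr rfl fun j _ => ?_
            rw [hBc]
            ring
          rw [hq, htr]
          ring
    obtain ⟨Ssub, hne, hmem⟩ := hexists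
    have hSmeas : MeasurableSet (Ssub : Set (ℝ × ℝ)) :=
      (Submodule.closed_of_finiteDimensional Ssub).measurableSet
    have hvol0 : volume (Ssub : Set (ℝ × ℝ)) = 0 := Measure.addHaar_submodule volume Ssub hne
    have hmap0 := hAC hvol0
    rw [Measure.map_apply hmeaspair hSmeas] at hmap0
    have hpre : ((fun ω => (F₁ ω, F₂ ω)) ⁻¹' (Ssub : Set (ℝ × ℝ))) = Set.univ :=
      Set.eq_univ_of_forall fun ω => hmem ω
    rw [hpre] at hmap0
    simp at hmap0
  · intro hdet
    have hlt : PAB^2 < PAA * PBB := by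
      rw [hdetC] at hdet
      nlinarith [hdet]
    refine Measure.AbsolutelyContinuous.mk fun S hS h0 => ?_
    rw [hpair, Measure.map_apply (hφcont.measurable.comp hGmeas) hS,
      Set.preimage_comp, ← Measure.map_apply hGmeas (hφcont.measurable hS), hGlaw]
    have hnull : volume (φ ⁻¹' S) = 0 := Stmt14.hard_core hA hB hlt S hS h0
    have hnull' : (Measure.pi fun _ : Fin n => (volume : Measure ℝ)) (φ ⁻¹' S) = 0 := by
      rw [← MeasureTheory.volume_pi]
      exact hnull
    exact Stmt14.gaussianPi_ac n hnull'
end
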